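/- Let g : [0,∞) → (0,∞) be a differentiable, strictly decreasing, log-convex function with g(x) → 0 as x → ∞, and suppose ∫₀^{g(N−1)} du/(u·log g⁻¹(u)) < ∞ for some N ≥ 3 with g(N−1) < 1. Then ∑_{n=N}^∞ (g(n) − g(n+1))/(g(n)·log n) < ∞. -/

import Mathlib

open MeasureTheory Filter

/-- Let `g : [0,∞) → (0,∞)` be differentiable, strictly decreasing, log-convex with
`g(x) → 0`, and suppose `∫₀^{g(N-1)} du/(u log g⁻¹(u)) < ∞` for some integer `N ≥ 3`
with `g(N-1) < 1`. Then `∑_{n=N}^∞ (g(n)-g(n+1))/(g(n) log n) < ∞`. -/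
theorem stmt18 (g ginv : ℝ → ℝ)
    (hpos : ∀ x ∈ Set.Ici (0:ℝ), 0 < g x)
    (hdiff : DifferentiableOn ℝ g (Set.Ici 0))
    (hanti : StrictAntiOn g (Set.Ici 0))
    (hlogconvex : ConvexOn ℝ (Set.Ici 0) (fun x => Real.log (g x)))
    (hlim : Tendsto g atTop (nhds 0))
    (hginv : ∀ u ∈ Set.Ioc (0:ℝ) (g 0), ginv u ∈ Set.Ici (0:ℝ) ∧ g (ginv u) = u)
    (N : ℕ) (hN : 3 ≤ N) (hgN : g ((N : ℝ) - 1) < 1)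
    (hint : ∫⁻ u in Set.Ioo (0:ℝ) (g ((N : ℝ) - 1)),
        ENNReal.ofReal (1 / (u * Real.log (ginv u))) < ⊤) :
    Summable (fun n : ℕ =>
      (g ((N + n : ℕ)) - g ((N + n + 1 : ℕ))) /
        (g ((N + n : ℕ)) * Real.log ((N + n : ℕ)))) := by
  set f : ℝ → ENNReal := fun u => ENNReal.ofReal (1 / (u * Real.log (ginv u))) with hf
  set s : ℕ → Set ℝ := fun n => Set.Ioo (g ((N + n + 1 : ℕ))) (g ((N + n : ℕ))) with hs
  have hNc : (3:ℝ) ≤ (N:ℝ) := by exact_mod_cast hN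
  have hmem : ∀ m : ℕ, ((m : ℕ) : ℝ) ∈ Set.Ici (0:ℝ) := by
    intro m; simp [Set.mem_Ici]
  have hmem' : ((N:ℝ) - 1) ∈ Set.Ici (0:ℝ) := by
    simp only [Set.mem_Ici]; linarith
  have h3 : ∀ n : ℕ, (3:ℝ) ≤ ((N + n : ℕ) : ℝ) := by
    intro n; push_cast; linarith [Nat.cast_nonneg (α := ℝ) n]
  have hgm : ∀ n : ℕ, 0 < g ((N + n : ℕ)) := fun n => hpos _ (hmem _)
  have hdec : ∀ n : ℕ, g ((N + n + 1 : ℕ)) < g ((N + n : ℕ)) := by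
    intro n
    exact hanti (hmem (N + n)) (hmem (N + n + 1)) (by push_cast; linarith)
  have hlt1 : ∀ n : ℕ, g ((N + n : ℕ)) < g ((N:ℝ) - 1) := by
    intro n
    have hN' : ((N:ℕ):ℝ) ≤ ((N + n : ℕ):ℝ) := by exact_mod_cast Nat.le_add_right N n
    exact hanti hmem' (hmem (N + n)) (by linarith)
  -- each interval lies in (0, g(N-1))
  have hsub : ∀ n : ℕ, s n ⊆ Set.Ioo (0:ℝ) (g ((N:ℝ) - 1)) := by
    intro n u hu
    have h1 : 0 < g ((N + n + 1 : ℕ)) := hpos _ (hmem _)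
    exact ⟨lt_trans h1 hu.1, lt_trans hu.2 (hlt1 n)⟩
  -- pointwise lower bound for the integrand on s n
  have hkey : ∀ n : ℕ, ∀ u ∈ s n,
      ENNReal.ofReal (1 / (g ((N + n : ℕ)) * Real.log ((N + n + 1 : ℕ)))) ≤ f u := by
    intro n u hu
    obtain ⟨hu1, hu2⟩ := hu
    have hgpos : 0 < g ((N + n + 1 : ℕ)) := hpos _ (hmem _)
    have hupos : 0 < u := lt_trans hgpos hu1
    have hule : u ≤ g 0 := by
      have h0 : g ((N + n : ℕ)) < g 0 := by
        have : ((0:ℕ):ℝ) ∈ Set.Ici (0:ℝ) := hmem 0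
        have h00 : (0:ℝ) ∈ Set.Ici (0:ℝ) := by simp
        exact hanti h00 (hmem (N + n)) (by linarith [h3 n])
      linarith
    obtain ⟨hginv0, hgeq⟩ := hginv u ⟨hupos, hule⟩
    have hgt : ((N + n : ℕ) : ℝ) < ginv u := by
      have := (hanti.lt_iff_gt hginv0 (hmem (N + n))).mp (by rw [hgeq]; exact hu2)
      exact this
    have hlt : ginv u < ((N + n + 1 : ℕ) : ℝ) :=
      (hanti.lt_iff_gt (hmem (N + n + 1)) hginv0).mp (by rw [hgeq]; exact hu1)
    have hginvpos : (1:ℝ) < ginv u := lt_of_le_of_lt (by linarith [h3 n]) hgt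
    have hlogpos : 0 < Real.log (ginv u) := Real.log_pos hginvpos
    have hlogle : Real.log (ginv u) ≤ Real.log ((N + n + 1 : ℕ)) :=
      Real.log_le_log (by linarith) (le_of_lt hlt)
    have hlogpos2 : 0 < Real.log ((N + n + 1 : ℕ)) := lt_of_lt_of_le hlogpos hlogle
    apply ENNReal.ofReal_le_ofReal
    apply one_div_le_one_div_of_le
    · positivity
    · exact mul_le_mul (le_of_lt hu2) hlogle (le_of_lt hlogpos) (le_of_lt (hgm n))
  -- the integrals over the pieces
  set I : ℕ → ENNReal := fun n => ∫⁻ u in s n, f u with hI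
  have hlogNn : ∀ n : ℕ, 0 < Real.log ((N + n : ℕ)) := by
    intro n
    exact Real.log_pos (by linarith [h3 n])
  have hlogNn1 : ∀ n : ℕ, 0 < Real.log ((N + n + 1 : ℕ)) := by
    intro n
    apply Real.log_pos
    have := h3 n; push_cast at this ⊢; linarith
  have hIlow : ∀ n : ℕ,
      ENNReal.ofReal ((g ((N + n : ℕ)) - g ((N + n + 1 : ℕ))) /
        (g ((N + n : ℕ)) * Real.log ((N + n + 1 : ℕ)))) ≤ I n := by
    intro n
    have hm : MeasurableSet (s n) := measurableSet_Ioo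
    have hgpos := hgm n
    have hlp := hlogNn1 n
    calc ENNReal.ofReal ((g ((N + n : ℕ)) - g ((N + n + 1 : ℕ))) /
          (g ((N + n : ℕ)) * Real.log ((N + n + 1 : ℕ))))
        = ENNReal.ofReal (1 / (g ((N + n : ℕ)) * Real.log ((N + n + 1 : ℕ)))) *
            volume (s n) := by
          rw [hs, Real.volume_Ioo, ← ENNReal.ofReal_mul (by positivity)]
          congr 1; field_simp
      _ = ∫⁻ _ in s n,
            ENNReal.ofReal (1 / (g ((N + n : ℕ)) * Real.log ((N + n + 1 : ℕ)))) := by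
          rw [setLIntegral_const]
      _ ≤ ∫⁻ u in s n, f u := setLIntegral_mono' hm (hkey n)
  -- pairwise disjoint
  have hmono : ∀ i j : ℕ, i < j → g ((N + j : ℕ)) ≤ g ((N + i + 1 : ℕ)) := by
    intro i j hij
    have hle : ((N + i + 1 : ℕ) : ℝ) ≤ ((N + j : ℕ) : ℝ) := by
      exact_mod_cast Nat.add_le_add_left hij N
    rcases hle.eq_or_lt with h | h
    · rw [← h]
    · exact le_of_lt (hanti (hmem (N + i + 1)) (hmem (N + j)) h)
  have hdisj : Pairwise (Function.onFun Disjoint s) := by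
    have key : ∀ i j : ℕ, i < j → Disjoint (s i) (s j) := by
      intro i j hij
      rw [Set.disjoint_right]
      intro x hxj hxi
      have h1 : g ((N + i + 1 : ℕ)) < x := hxi.1
      have h2 : x < g ((N + j : ℕ)) := hxj.2
      have := hmono i j hij
      linarith
    intro i j hij
    rcases lt_or_gt_of_ne hij with h | h
    · exact key i j h
    · exact (key j i h).symm
  have htsum : ∑' n, I n ≤ ∫⁻ u in Set.Ioo (0:ℝ) (g ((N:ℝ) - 1)), f u := by
    rw [hI, ← lintegral_iUnion (fun n => measurableSet_Ioo) hdisj f]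
    exact lintegral_mono_set (Set.iUnion_subset hsub)
  have hne : ∑' n, I n ≠ ⊤ := (lt_of_le_of_lt htsum hint).ne
  have hIfin : ∀ n, I n ≠ ⊤ := fun n => ne_top_of_le_ne_top hne (ENNReal.le_tsum n)
  have hsummable : Summable (fun n => (I n).toReal) := ENNReal.summable_toReal hne
  apply Summable.of_nonneg_of_le ?_ ?_ (hsummable.mul_left 2)
  · intro n
    have := hdec n
    have hlp := hlogNn n
    have hgpos := hgm n
    apply div_nonneg (by linarith) (by positivity)
  · intro n
    have hD : 0 ≤ g ((N + n : ℕ)) - g ((N + n + 1 : ℕ)) := by linarith [hdec n]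
    have hgpos := hgm n
    have hLm := hlogNn n
    have hLm1 := hlogNn1 n
    have h1 : (g ((N + n : ℕ)) - g ((N + n + 1 : ℕ))) /
        (g ((N + n : ℕ)) * Real.log ((N + n + 1 : ℕ))) ≤ (I n).toReal :=
      (ENNReal.ofReal_le_iff_le_toReal (hIfin n)).mp (hIlow n)
    have hlog2 : Real.log ((N + n + 1 : ℕ)) ≤ 2 * Real.log ((N + n : ℕ)) := by
      have hsq : ((N + n + 1 : ℕ) : ℝ) ≤ ((N + n : ℕ) : ℝ) ^ 2 := by
        have := h3 n; push_cast at this ⊢; nlinarith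
      calc Real.log ((N + n + 1 : ℕ)) ≤ Real.log (((N + n : ℕ) : ℝ) ^ 2) :=
            Real.log_le_log (by push_cast; linarith [h3 n]) hsq
        _ = 2 * Real.log ((N + n : ℕ)) := by
            rw [← Real.rpow_natCast ((N + n : ℕ) : ℝ) 2,
              Real.log_rpow (by linarith [h3 n])]
            norm_num
    have h2 : (g ((N + n : ℕ)) - g ((N + n + 1 : ℕ))) /
        (g ((N + n : ℕ)) * Real.log ((N + n : ℕ))) ≤
        2 * ((g ((N + n : ℕ)) - g ((N + n + 1 : ℕ))) /
          (g ((N + n : ℕ)) * Real.log ((N + n + 1 : ℕ)))) := by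
      rw [mul_div_assoc']
      rw [div_le_div_iff₀ (by positivity) (by positivity)]
      nlinarith [mul_le_mul_of_nonneg_left hlog2 (mul_nonneg hD hgpos.le)]
    calc (g ((N + n : ℕ)) - g ((N + n + 1 : ℕ))) /
        (g ((N + n : ℕ)) * Real.log ((N + n : ℕ)))
        ≤ 2 * ((g ((N + n : ℕ)) - g ((N + n + 1 : ℕ))) /
          (g ((N + n : ℕ)) * Real.log ((N + n + 1 : ℕ)))) := h2
      _ ≤ 2 * (I n).toReal := by linarith
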